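/- The first cumulant (mean) of A = -(a/n)·Σᵢ log(1 - F(Xᵢ)^a) equals a·Σ_{l=1}^∞ (1/l - 1/(l + 1/a)) = a·(ψ(1 + 1/a) + γ), where ψ is the digamma function and γ is Euler's constant. In particular, for a = 1 the mean is 1. -/

import Mathlib

open MeasureTheory
open scoped ProbabilityTheory

/-- The digamma function `ψ = Γ'/Γ`. -/
noncomputable def digamma (x : ℝ) : ℝ := deriv Real.Gamma x / Real.Gamma x

section DigammaSeries
open Set Filter Topology Real

private lemma dgm_hder {y : ℝ} (hy : 0 < y) :
    DifferentiableAt ℝ (Real.log ∘ Real.Gamma) y := by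
  refine (Real.differentiableAt_Gamma ?_).log (Real.Gamma_ne_zero ?_) <;>
    exact fun m => ne_of_gt (by have : (0:ℝ) ≤ m := Nat.cast_nonneg m; linarith)

private lemma dgm_eq {y : ℝ} (hy : 0 < y) :
    deriv (Real.log ∘ Real.Gamma) y = digamma y := by
  rw [Function.comp_def, deriv.log (Real.differentiableAt_Gamma (fun m => by
    have : (0:ℝ) ≤ m := Nat.cast_nonneg m; intro h; rw [h] at hy; linarith))
    (Real.Gamma_pos_of_pos hy).ne', digamma]

private lemma dgm_rec {y : ℝ} (hy : 0 < y) :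
    deriv (Real.log ∘ Real.Gamma) (y + 1) = deriv (Real.log ∘ Real.Gamma) y + 1 / y := by
  have h_rec : ∀ t : ℝ, 0 < t →
      (Real.log ∘ Real.Gamma) (t + 1) = (Real.log ∘ Real.Gamma) t + Real.log t := by
    intro t ht
    simp only [Function.comp_apply, Real.Gamma_add_one ht.ne',
      Real.log_mul ht.ne' (Real.Gamma_pos_of_pos ht).ne', add_comm]
  rw [← deriv_comp_add_const, one_div, ← Real.deriv_log,
    ← deriv_add (dgm_hder hy) (Real.differentiableAt_log hy.ne')]
  apply Filter.EventuallyEq.deriv_eq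
  filter_upwards [eventually_gt_nhds hy] using h_rec

private lemma dgm_mono {u v : ℝ} (hu : 0 < u) (huv : u ≤ v) :
    deriv (Real.log ∘ Real.Gamma) u ≤ deriv (Real.log ∘ Real.Gamma) v := by
  rcases eq_or_lt_of_le huv with h | h
  · rw [h]
  have hv : 0 < v := hu.trans h
  calc deriv (Real.log ∘ Real.Gamma) u
      ≤ slope (Real.log ∘ Real.Gamma) u v :=
        Real.convexOn_log_Gamma.deriv_le_slope hu hv h (dgm_hder hu)
    _ ≤ deriv (Real.log ∘ Real.Gamma) v :=
        Real.convexOn_log_Gamma.slope_le_deriv hu hv h (dgm_hder hv)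

private lemma dgm_shift {y : ℝ} (hy : 0 < y) (n : ℕ) :
    deriv (Real.log ∘ Real.Gamma) (y + n) =
      deriv (Real.log ∘ Real.Gamma) y + ∑ j ∈ Finset.range n, 1 / (y + j) := by
  induction n with
  | zero => simp
  | succ n ih =>
    have h1 : (y : ℝ) + (n + 1 : ℕ) = (y + n) + 1 := by push_cast; ring
    rw [h1, dgm_rec (by positivity), ih, Finset.sum_range_succ]
    ring

private lemma dgm_one : deriv (Real.log ∘ Real.Gamma) 1 = -Real.eulerMascheroniConstant := by
  rw [dgm_eq one_pos, digamma, Real.Gamma_one, div_one,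
    Real.eulerMascheroniConstant_eq_neg_deriv, neg_neg]

lemma tendsto_digamma_partial (x : ℝ) (hx : 0 < x) :
    Tendsto (fun n : ℕ => ∑ j ∈ Finset.range n, (1 / (j + 1 : ℝ) - 1 / (j + 1 + x))) atTop
      (𝓝 (digamma (1 + x) + Real.eulerMascheroniConstant)) := by
  set γ := Real.eulerMascheroniConstant
  set D := deriv (Real.log ∘ Real.Gamma) with hD
  set m := ⌈x⌉₊ with hm
  have hxm : x ≤ m := Nat.le_ceil x
  have key : ∀ n : ℕ, D (1 + x) + γ - m * (1 / (n + 1 : ℝ)) ≤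
      (∑ j ∈ Finset.range n, (1 / (j + 1 : ℝ) - 1 / (j + 1 + x))) ∧
      (∑ j ∈ Finset.range n, (1 / (j + 1 : ℝ) - 1 / (j + 1 + x))) ≤ D (1 + x) + γ := by
    intro n
    have Dn : D (1 + (n : ℝ)) = -γ + ∑ j ∈ Finset.range n, 1 / (1 + (j : ℝ)) := by
      rw [hD, dgm_shift one_pos n, dgm_one]
    have Dxn : D (1 + x + (n : ℝ)) = D (1 + x) + ∑ j ∈ Finset.range n, 1 / (1 + x + (j : ℝ)) := by
      rw [hD, dgm_shift (by positivity) n]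
    have Dmn : D (1 + ((n + m : ℕ) : ℝ)) = -γ + ∑ j ∈ Finset.range (n + m), 1 / (1 + (j : ℝ)) := by
      rw [hD, dgm_shift one_pos (n + m), dgm_one]
    have hlow : D (1 + (n : ℝ)) ≤ D (1 + x + (n : ℝ)) := dgm_mono (by positivity) (by linarith)
    have hhigh : D (1 + x + (n : ℝ)) ≤ D (1 + ((n + m : ℕ) : ℝ)) := by
      apply dgm_mono (by positivity)
      push_cast; linarith
    have hsum : (∑ j ∈ Finset.range n, (1 / (j + 1 : ℝ) - 1 / (j + 1 + x))) =
        (∑ j ∈ Finset.range n, 1 / (1 + (j : ℝ))) -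
        (∑ j ∈ Finset.range n, 1 / (1 + x + (j : ℝ))) := by
      rw [← Finset.sum_sub_distrib]
      exact Finset.sum_congr rfl fun j _ => by ring_nf
    have htail : (∑ j ∈ Finset.range (n + m), 1 / (1 + (j : ℝ))) -
        (∑ j ∈ Finset.range n, 1 / (1 + (j : ℝ))) ≤ m * (1 / (n + 1 : ℝ)) := by
      rw [← Finset.sum_Ico_eq_sub _ (Nat.le_add_right n m)]
      calc (∑ j ∈ Finset.Ico n (n + m), 1 / (1 + (j : ℝ)))
          ≤ ∑ _j ∈ Finset.Ico n (n + m), 1 / (n + 1 : ℝ) := by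
            apply Finset.sum_le_sum
            intro j hj
            have hj' : (n : ℝ) ≤ j := Nat.cast_le.2 (Finset.mem_Ico.1 hj).1
            apply one_div_le_one_div_of_le (by positivity) (by linarith)
        _ = m * (1 / (n + 1 : ℝ)) := by
            rw [Finset.sum_const, Nat.card_Ico, Nat.add_sub_cancel_left, nsmul_eq_mul]
    constructor
    · have : D (1 + x + (n : ℝ)) - D (1 + (n : ℝ)) ≤ m * (1 / (n + 1 : ℝ)) := by
        have := sub_le_sub_right hhigh (D (1 + (n:ℝ)))
        refine this.trans ?_
        rw [Dmn, Dn]; linarith [htail]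
      rw [hsum]; rw [Dxn] at this; rw [Dn] at this; linarith
    · have : 0 ≤ D (1 + x + (n : ℝ)) - D (1 + (n : ℝ)) := by linarith
      rw [hsum]; rw [Dxn, Dn] at this; linarith
  have hlim : Tendsto (fun n : ℕ => D (1 + x) + γ - m * (1 / (n + 1 : ℝ))) atTop
      (𝓝 (D (1 + x) + γ)) := by
    have h0 : Tendsto (fun n : ℕ => (m : ℝ) * (1 / (n + 1 : ℝ))) atTop (𝓝 0) := by
      simpa using (tendsto_one_div_add_atTop_nhds_zero_nat).const_mul (m : ℝ)
    simpa using (tendsto_const_nhds (x := D (1 + x) + γ)).sub h0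
  have hfin := tendsto_of_tendsto_of_tendsto_of_le_of_le hlim tendsto_const_nhds
    (fun n => (key n).1) (fun n => (key n).2)
  have : D (1 + x) = digamma (1 + x) := dgm_eq (by positivity)
  rwa [this] at hfin
end DigammaSeries

section Uniform
open Set Filter Topology ProbabilityTheory

lemma map_cdf_uniform (μ : Measure ℝ) [IsProbabilityMeasure μ] (F : ℝ → ℝ)
    (hF : F = fun x => cdf μ x) (hFcont : Continuous F) :
    Measure.map F μ = (volume : Measure ℝ).restrict (Ioo 0 1) := by
  have hFmono : Monotone F := by rw [hF]; exact monotone_cdf μ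
  have hF01 : ∀ t, F t ≤ 1 := by rw [hF]; exact fun t => cdf_le_one μ t
  have hIic : ∀ t, μ (Iic t) = ENNReal.ofReal (F t) := by
    rw [hF]; exact fun t => (ofReal_cdf μ t).symm
  have hbot : Tendsto F atBot (𝓝 0) := by rw [hF]; exact tendsto_cdf_atBot μ
  have htop : Tendsto F atTop (𝓝 1) := by rw [hF]; exact tendsto_cdf_atTop μ
  refine Measure.ext_of_Iic _ _ (fun u => ?_)
  rw [Measure.map_apply hFcont.measurable measurableSet_Iic,
    Measure.restrict_apply measurableSet_Iic]
  rcases le_or_gt 1 u with hu | hu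
  · have h1 : F ⁻¹' Iic u = univ := eq_univ_of_forall fun t => (hF01 t).trans hu
    have h2 : Iic u ∩ Ioo 0 1 = Ioo 0 1 := inter_eq_self_of_subset_right
      (fun t ht => le_trans ht.2.le hu)
    rw [h1, h2, measure_univ, Real.volume_Ioo]
    norm_num
  · have h2 : Iic u ∩ Ioo 0 1 = Ioc 0 u := by
      ext t
      simp only [mem_inter_iff, mem_Iic, mem_Ioo, mem_Ioc]
      exact ⟨fun ⟨h1, h2, _⟩ => ⟨h2, h1⟩, fun ⟨h1, h2⟩ => ⟨h2, h1, lt_of_le_of_lt h2 hu⟩⟩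
    rw [h2, Real.volume_Ioc, sub_zero]
    rcases eq_empty_or_nonempty (F ⁻¹' Iic u) with hs | hs
    · have hu0 : u ≤ 0 := by
        by_contra hu0
        push_neg at hu0
        rcases (hbot.eventually_lt_const hu0).exists with ⟨t, ht⟩
        exact (eq_empty_iff_forall_notMem.1 hs) t ht.le
      rw [hs, measure_empty, ENNReal.ofReal_eq_zero.2 hu0]
    · have hbdd : BddAbove (F ⁻¹' Iic u) := by
        rcases (htop.eventually_const_lt hu).exists with ⟨M, hM⟩
        refine ⟨M, fun t ht => ?_⟩
        by_contra htM
        push_neg at htM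
        exact absurd (le_trans (hFmono htM.le) ht) (not_le.2 hM)
      have hclosed : IsClosed (F ⁻¹' Iic u) := isClosed_Iic.preimage hFcont
      set x₀ := sSup (F ⁻¹' Iic u) with hx₀
      have hx₀mem : x₀ ∈ F ⁻¹' Iic u := hclosed.csSup_mem hs hbdd
      have hset : F ⁻¹' Iic u = Iic x₀ := by
        apply Subset.antisymm (fun t ht => le_csSup hbdd ht)
        exact fun t (ht : t ≤ x₀) => le_trans (hFmono ht) hx₀mem
      have hFx₀ : F x₀ = u := by
        refine le_antisymm hx₀mem ?_
        by_contra hlt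
        push_neg at hlt
        have hev : ∀ᶠ t in 𝓝 x₀, F t < u :=
          (hFcont.continuousAt (x := x₀)).eventually_lt_const hlt
        rcases ((eventually_nhdsWithin_of_eventually_nhds (a := x₀) (s := Ioi x₀) hev).and
          eventually_mem_nhdsWithin).exists with ⟨t, ht, ht'⟩
        exact absurd (le_csSup hbdd (ht.le : F t ≤ u)) (not_le.2 ht')
      rw [hset, hIic, hFx₀]
end Uniform

section Integrals
open Set Filter Topology

variable {a : ℝ}

private lemma gk_cont (ha : 0 < a) (k : ℕ) :
    Continuous (fun u : ℝ => u ^ (a * (k + 1)) / ((k:ℝ) + 1)) := by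
  apply Continuous.div_const
  exact continuous_iff_continuousAt.mpr fun x =>
    Real.continuousAt_rpow_const x _ (Or.inr (by positivity))

private lemma gk_hasSum (ha : 0 < a) {u : ℝ} (hu : u ∈ Ioo (0:ℝ) 1) :
    HasSum (fun k : ℕ => u ^ (a * (k + 1)) / ((k:ℝ) + 1)) (-Real.log (1 - u ^ a)) := by
  have ht0 : 0 ≤ u ^ a := Real.rpow_nonneg hu.1.le a
  have ht1 : u ^ a < 1 := Real.rpow_lt_one hu.1.le hu.2 ha
  have h := Real.hasSum_pow_div_log_of_abs_lt_one (x := u ^ a) (by rw [abs_of_nonneg ht0]; exact ht1)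
  convert h using 2 with k
  rw [← Real.rpow_natCast (u ^ a) (k + 1), ← Real.rpow_mul hu.1.le]
  push_cast
  ring_nf

private lemma gk_integrableOn (ha : 0 < a) (k : ℕ) :
    IntegrableOn (fun u : ℝ => u ^ (a * (k + 1)) / ((k:ℝ) + 1)) (Ioo 0 1) volume := by
  have hr : (-1:ℝ) < a * (k + 1) := by nlinarith [mul_pos ha (by positivity : (0:ℝ) < (k:ℝ)+1)]
  have h := (intervalIntegral.intervalIntegrable_rpow' (a := 0) (b := 1)
    (r := a * (k + 1)) hr).1
  exact (h.mono_set Ioo_subset_Ioc_self).div_const _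

private lemma gk_integral (ha : 0 < a) (k : ℕ) :
    ∫ u in Ioo (0:ℝ) 1, u ^ (a * (k + 1)) / ((k:ℝ) + 1) =
      1 / (((k:ℝ) + 1) * (a * ((k:ℝ) + 1) + 1)) := by
  rw [integral_div, ← integral_Ioc_eq_integral_Ioo,
    ← intervalIntegral.integral_of_le (zero_le_one (α := ℝ)),
    integral_rpow (Or.inl (by nlinarith [mul_pos ha (by positivity : (0:ℝ) < (k:ℝ)+1)]))]
  rw [Real.one_rpow, Real.zero_rpow (by positivity)]
  field_simp
  ring

private lemma bk_summable (ha : 0 < a) :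
    Summable (fun k : ℕ => 1 / (((k:ℝ) + 1) * (a * ((k:ℝ) + 1) + 1))) := by
  have hs : Summable (fun k : ℕ => (1/a) * (1 / ((k:ℝ) + 1) ^ 2)) := by
    apply Summable.mul_left
    have h := Real.summable_one_div_nat_pow.2 (le_refl 2)
    have h2 := (summable_nat_add_iff (f := fun n : ℕ => 1 / (n:ℝ) ^ 2) 1).2 h
    simpa using h2
  refine Summable.of_nonneg_of_le (fun k => by positivity) (fun k => ?_) hs
  have hk1 : (0:ℝ) < (k:ℝ) + 1 := by positivity
  have h2 : (0:ℝ) < a * ((k:ℝ)+1) := by positivity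
  calc 1 / (((k:ℝ) + 1) * (a * ((k:ℝ) + 1) + 1))
      ≤ 1 / (((k:ℝ) + 1) * (a * ((k:ℝ) + 1))) :=
        one_div_le_one_div_of_le (by positivity) (by nlinarith)
    _ = 1/a * (1 / ((k:ℝ) + 1) ^ 2) := by field_simp

private lemma gk_lintegral (ha : 0 < a) (k : ℕ) :
    ∫⁻ u in Ioo (0:ℝ) 1, ‖u ^ (a * (k + 1)) / ((k:ℝ) + 1)‖ₑ =
      ENNReal.ofReal (1 / (((k:ℝ) + 1) * (a * ((k:ℝ) + 1) + 1))) := by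
  have h1 : ∫⁻ u in Ioo (0:ℝ) 1, ‖u ^ (a * (k + 1)) / ((k:ℝ) + 1)‖ₑ =
      ∫⁻ u in Ioo (0:ℝ) 1, ENNReal.ofReal (u ^ (a * (k + 1)) / ((k:ℝ) + 1)) := by
    apply lintegral_congr_ae
    refine (ae_restrict_iff' measurableSet_Ioo).2 (Filter.Eventually.of_forall (fun u hu => ?_))
    exact Real.enorm_eq_ofReal (div_nonneg (Real.rpow_nonneg hu.1.le _) (by positivity))
  rw [h1, ← ofReal_integral_eq_lintegral_ofReal (gk_integrableOn ha k)
    ((ae_restrict_iff' measurableSet_Ioo).2 (Filter.Eventually.of_forall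
      (fun u hu => div_nonneg (Real.rpow_nonneg hu.1.le _) (by positivity)))), gk_integral ha k]

private lemma loga_meas (ha : 0 < a) :
    Continuous (fun u : ℝ => 1 - u ^ a) := by
  apply continuous_const.sub
  exact continuous_iff_continuousAt.mpr fun x =>
    Real.continuousAt_rpow_const x _ (Or.inr ha.le)

lemma loga_integrableOn (ha : 0 < a) :
    IntegrableOn (fun u : ℝ => Real.log (1 - u ^ a)) (Ioo 0 1) volume := by
  constructor
  · exact (Real.measurable_log.comp (loga_meas ha).measurable).aestronglyMeasurable
  · rw [HasFiniteIntegral]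
    have h1 : ∫⁻ u in Ioo (0:ℝ) 1, (‖Real.log (1 - u ^ a)‖ₑ : ENNReal) =
        ∫⁻ u in Ioo (0:ℝ) 1, ∑' k : ℕ, ENNReal.ofReal (u ^ (a * (k + 1)) / ((k:ℝ) + 1)) := by
      apply lintegral_congr_ae
      refine (ae_restrict_iff' measurableSet_Ioo).2 (Filter.Eventually.of_forall (fun u hu => ?_))
      show (‖Real.log (1 - u ^ a)‖ₑ : ENNReal) =
        ∑' k : ℕ, ENNReal.ofReal (u ^ (a * (k + 1)) / ((k:ℝ) + 1))
      have hsum := gk_hasSum ha hu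
      have hlog : Real.log (1 - u ^ a) ≤ 0 := by
        apply Real.log_nonpos
        · nlinarith [Real.rpow_lt_one hu.1.le hu.2 ha]
        · nlinarith [Real.rpow_nonneg hu.1.le a]
      rw [Real.enorm_eq_ofReal_abs, abs_of_nonpos hlog, ← hsum.tsum_eq,
        ENNReal.ofReal_tsum_of_nonneg
          (fun k => div_nonneg (Real.rpow_nonneg hu.1.le _) (by positivity)) hsum.summable]
    rw [h1, lintegral_tsum (fun k => ((gk_cont ha k).measurable.ennreal_ofReal).aemeasurable)]
    have h2 : ∀ k : ℕ, ∫⁻ u in Ioo (0:ℝ) 1, ENNReal.ofReal (u ^ (a * (k + 1)) / ((k:ℝ) + 1)) =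
        ENNReal.ofReal (1 / (((k:ℝ) + 1) * (a * ((k:ℝ) + 1) + 1))) := by
      intro k
      rw [← gk_lintegral ha k]
      apply lintegral_congr_ae
      refine (ae_restrict_iff' measurableSet_Ioo).2 (Filter.Eventually.of_forall (fun u hu => ?_))
      exact (Real.enorm_eq_ofReal (div_nonneg (Real.rpow_nonneg hu.1.le _) (by positivity))).symm
    simp_rw [h2]
    rw [← ENNReal.ofReal_tsum_of_nonneg (fun k => by positivity) (bk_summable ha)]
    exact ENNReal.ofReal_lt_top

lemma loga_integral (ha : 0 < a) :
    ∫ u in Ioo (0:ℝ) 1, Real.log (1 - u ^ a) =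
      -∑' k : ℕ, 1 / (((k:ℝ) + 1) * (a * ((k:ℝ) + 1) + 1)) := by
  have h1 : ∫ u in Ioo (0:ℝ) 1, Real.log (1 - u ^ a) =
      -∫ u in Ioo (0:ℝ) 1, ∑' k : ℕ, u ^ (a * (k + 1)) / ((k:ℝ) + 1) := by
    rw [← integral_neg]
    apply setIntegral_congr_fun measurableSet_Ioo
    intro u hu
    show Real.log (1 - u ^ a) = -∑' k : ℕ, u ^ (a * (k + 1)) / ((k:ℝ) + 1)
    rw [(gk_hasSum ha hu).tsum_eq, neg_neg]

  rw [h1, integral_tsum (fun k => (gk_cont ha k).aestronglyMeasurable) ?hne]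
  case hne =>
    simp_rw [gk_lintegral ha]
    rw [← ENNReal.ofReal_tsum_of_nonneg (fun k => by positivity) (bk_summable ha)]
    exact ENNReal.ofReal_ne_top
  rw [neg_inj]
  exact tsum_congr fun k => gk_integral ha k
end Integrals
section Main
open Set Filter Topology ProbabilityTheory

private lemma tsum_pnat_eq (a : ℝ) (ha : 0 < a) :
    ∑' l : ℕ+, (1 / (l : ℝ) - 1 / ((l : ℝ) + 1 / a)) =
      ∑' k : ℕ, 1 / (((k:ℝ) + 1) * (a * ((k:ℝ) + 1) + 1)) := by
  rw [← Equiv.pnatEquivNat.symm.tsum_eq (fun l : ℕ+ => 1 / (l : ℝ) - 1 / ((l : ℝ) + 1 / a))]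
  apply tsum_congr
  intro k
  have hc : ((Equiv.pnatEquivNat.symm k : ℕ+) : ℝ) = (k : ℝ) + 1 := by
    show ((k + 1 : ℕ) : ℝ) = (k : ℝ) + 1
    push_cast; ring
  rw [hc]
  have h1 : (0:ℝ) < (k:ℝ) + 1 := by positivity
  field_simp
  ring

private lemma summable_pnat_terms (a : ℝ) (ha : 0 < a) :
    Summable (fun k : ℕ => (1 / ((k:ℝ) + 1) - 1 / (((k:ℝ) + 1) + 1 / a))) := by
  apply (bk_summable ha).congr
  intro k
  have h1 : (0:ℝ) < (k:ℝ) + 1 := by positivity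
  field_simp
  ring

private lemma tsum_pnat_eq_digamma (a : ℝ) (ha : 0 < a) :
    ∑' l : ℕ+, (1 / (l : ℝ) - 1 / ((l : ℝ) + 1 / a)) =
      digamma (1 + 1 / a) + Real.eulerMascheroniConstant := by
  have hs := summable_pnat_terms a ha
  have h1 := hs.hasSum.tendsto_sum_nat
  have h2 := tendsto_digamma_partial (1 / a) (by positivity)
  have h3 : (fun n : ℕ => ∑ k ∈ Finset.range n, (1 / ((k:ℝ) + 1) - 1 / (((k:ℝ) + 1) + 1 / a))) =
      fun n : ℕ => ∑ j ∈ Finset.range n, (1 / ((j:ℝ) + 1) - 1 / ((j:ℝ) + 1 + 1 / a)) := by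
    funext n; exact Finset.sum_congr rfl fun j _ => by ring_nf
  rw [h3] at h1
  have := tendsto_nhds_unique h1 h2
  rw [← this]
  rw [tsum_pnat_eq a ha]
  apply tsum_congr
  intro k
  have h1 : (0:ℝ) < (k:ℝ) + 1 := by positivity
  field_simp
  ring

/-- The mean of `A = -(a/n)·Σᵢ log(1 - F(Xᵢ)^a)` equals
`a·Σ_{l≥1}(1/l - 1/(l+1/a)) = a·(ψ(1+1/a) + γ)`; in particular it is `1` when `a = 1`. -/
theorem mean_test_statistic (Ω : Type*) [MeasureSpace Ω]
    [IsProbabilityMeasure (ℙ : Measure Ω)]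
    (n : ℕ) (hn : 0 < n) (X : Fin n → Ω → ℝ)
    (hmeas : ∀ i, Measurable (X i))
    (hindep : ProbabilityTheory.iIndepFun X ℙ)
    (μ : Measure ℝ) (hid : ∀ i, Measure.map (X i) ℙ = μ)
    (F : ℝ → ℝ) (hF : F = fun x => ProbabilityTheory.cdf μ x) (hFcont : Continuous F)
    (a : ℝ) (ha : 0 < a)
    (A : Ω → ℝ)
    (hA : ∀ ω : Ω, A ω = -(a / n) * ∑ i, Real.log (1 - F (X i ω) ^ a)) :
    (∫ ω : Ω, A ω ∂(ℙ : Measure Ω)) = a * ∑' l : ℕ+, (1 / (l : ℝ) - 1 / ((l : ℝ) + 1 / a)) ∧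
    (∫ ω : Ω, A ω ∂(ℙ : Measure Ω)) = a * (digamma (1 + 1 / a) + Real.eulerMascheroniConstant) ∧
    (a = 1 → (∫ ω : Ω, A ω ∂(ℙ : Measure Ω)) = 1) := by
  haveI hProb : IsProbabilityMeasure μ := by
    rw [← hid ⟨0, hn⟩]
    exact Measure.isProbabilityMeasure_map (hmeas _).aemeasurable
  have hmap : Measure.map F μ = (volume : Measure ℝ).restrict (Ioo 0 1) :=
    map_cdf_uniform μ F hF hFcont
  set h : ℝ → ℝ := fun u => Real.log (1 - u ^ a) with hh
  have hhmeas : Measurable h := by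
    apply Real.measurable_log.comp
    exact (continuous_const.sub (continuous_iff_continuousAt.mpr fun x =>
      Real.continuousAt_rpow_const x _ (Or.inr ha.le))).measurable
  have hgmeas : Measurable (h ∘ F) := hhmeas.comp hFcont.measurable
  -- each summand has the same integral
  have hInth : Integrable h ((volume : Measure ℝ).restrict (Ioo 0 1)) := loga_integrableOn ha
  have hIntg : Integrable (h ∘ F) μ := by
    have := (integrable_map_measure hhmeas.aestronglyMeasurable
      hFcont.measurable.aemeasurable (μ := μ)).mp (by rwa [hmap])
    exact this
  have hInt : ∀ i, Integrable (fun ω => Real.log (1 - F (X i ω) ^ a)) ℙ := by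
    intro i
    have := (integrable_map_measure hgmeas.aestronglyMeasurable
      (hmeas i).aemeasurable (μ := (ℙ : Measure Ω))).mp (by rwa [hid i])
    exact this
  have hIeq : ∀ i, ∫ ω, Real.log (1 - F (X i ω) ^ a) ∂(ℙ : Measure Ω) =
      -∑' k : ℕ, 1 / (((k:ℝ) + 1) * (a * ((k:ℝ) + 1) + 1)) := by
    intro i
    have e1 : ∫ ω, Real.log (1 - F (X i ω) ^ a) ∂(ℙ : Measure Ω) = ∫ x, (h ∘ F) x ∂μ := by
      rw [← hid i, integral_map (hmeas i).aemeasurable]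
      · rfl
      · rw [hid i]; exact hgmeas.aestronglyMeasurable
    have e2 : ∫ x, (h ∘ F) x ∂μ = ∫ u, h u ∂(Measure.map F μ) :=
      (integral_map hFcont.measurable.aemeasurable
        (by rw [hmap]; exact hhmeas.aestronglyMeasurable)).symm
    rw [e1, e2, hmap]
    exact loga_integral ha
  -- compute the expectation
  have hmain : (∫ ω : Ω, A ω ∂(ℙ : Measure Ω)) =
      a * ∑' k : ℕ, 1 / (((k:ℝ) + 1) * (a * ((k:ℝ) + 1) + 1)) := by
    have : (∫ ω : Ω, A ω ∂(ℙ : Measure Ω)) =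
        ∫ ω, -(a / n) * ∑ i, Real.log (1 - F (X i ω) ^ a) ∂(ℙ : Measure Ω) := by
      exact integral_congr_ae (Filter.Eventually.of_forall hA)
    rw [this, integral_const_mul, integral_finset_sum _ (fun i _ => hInt i)]
    have : ∀ i ∈ (Finset.univ : Finset (Fin n)), (∫ ω, Real.log (1 - F (X i ω) ^ a) ∂(ℙ : Measure Ω)) = -∑' k : ℕ, 1 / (((k:ℝ) + 1) * (a * ((k:ℝ) + 1) + 1)) := fun i _ => hIeq i
    rw [Finset.sum_congr rfl this, Finset.sum_const, Finset.card_univ, Fintype.card_fin,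
      nsmul_eq_mul]
    have hn' : (n : ℝ) ≠ 0 := Nat.cast_ne_zero.mpr hn.ne'
    field_simp
  have c1 : (∫ ω : Ω, A ω ∂(ℙ : Measure Ω)) =
      a * ∑' l : ℕ+, (1 / (l : ℝ) - 1 / ((l : ℝ) + 1 / a)) := by
    rw [hmain, tsum_pnat_eq a ha]
  refine ⟨c1, ?_, ?_⟩
  · rw [c1, tsum_pnat_eq_digamma a ha]
  · intro ha1
    subst ha1
    rw [c1, tsum_pnat_eq_digamma 1 one_pos]
    have hd : digamma (1 + 1 / 1) = 1 - Real.eulerMascheroniConstant := by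
      have h2 : (1 : ℝ) + 1 / 1 = ((1:ℕ) : ℝ) + 1 := by norm_num
      rw [h2, digamma, Real.deriv_Gamma_nat 1]
      have hG : Real.Gamma (((1:ℕ):ℝ) + 1) = 1 := by
        rw [Real.Gamma_nat_eq_factorial]; norm_num
      rw [hG]
      norm_num [harmonic_succ]
      ring
    rw [hd]
    ring
end Main
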